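/- arXiv:2302.02882 — 2 statements merged into one kernel-verified Lean document; each statement's English description precedes it below -/
import Mathlib

section
/- The r-th order implicit Taylor method is A-stable for even r in the following sense: for the Dahlquist equation y' = μ y with Re(μ) ≤ 0 and r = 2, the stability function R(z) = 1/(1 − z + z²/2) satisfies |R(z)| ≤ 1 for all complex z with Re(z) ≤ 0. -/
theorem stmt_10 :
    ∀ z : ℂ, z.re ≤ 0 → ‖(1 / (1 - z + z ^ 2 / 2))‖ ≤ 1 := by
  intro z hz
  have hns : 1 ≤ Complex.normSq (1 - z + z ^ 2 / 2) := by
    obtain ⟨x, y⟩ := z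
    simp only [Complex.normSq_apply, Complex.add_re, Complex.sub_re, Complex.one_re,
      Complex.div_re, Complex.div_im, Complex.add_im, Complex.sub_im, Complex.one_im,
      Complex.normSq_apply] at *
    norm_num [pow_two, Complex.mul_re, Complex.mul_im] at *
    nlinarith [sq_nonneg x, sq_nonneg y, sq_nonneg (x*y), sq_nonneg (x+y), sq_nonneg (x-y),
      mul_nonneg (mul_nonneg (neg_nonneg.2 hz) (sq_nonneg y)) (le_of_eq rfl)]
  have habs : 1 ≤ ‖(1 - z + z ^ 2 / 2)‖ := by
    rw [← Complex.sq_norm] at hns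
    nlinarith [norm_nonneg (1 - z + z ^ 2 / 2)]
  rw [norm_div, norm_one]
  exact div_le_one_of_le₀ habs (by positivity)
end

section
/- The 1-norm condition number of the matrix 𝓕'_EJ (the DerSol Jacobian of the third-order implicit Taylor method for y' = −y/ε with fixed Δt = 1) satisfies cond₁(𝓕'_EJ) = O(ε^{−1}) as ε → 0⁺: there exist constants c, ε₀ > 0 with cond₁(𝓕'_EJ) ≤ c/ε for all 0 < ε ≤ ε₀. -/
/-- Operator norm induced by the ℓ¹ vector norm: maximum absolute column sum. -/
noncomputable def colNorm {n : Type*} [Fintype n] [Nonempty n] (A : Matrix n n ℝ) : ℝ :=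
  Finset.univ.sup' Finset.univ_nonempty (fun j => ∑ i, |A i j|)

/-- 1-norm condition number. -/
noncomputable def cond1 {n : Type*} [Fintype n] [Nonempty n] [DecidableEq n]
    (A : Matrix n n ℝ) : ℝ :=
  colNorm A * colNorm A⁻¹

/-- The EJ-DerSol Jacobian of the third-order implicit Taylor method for
`y' = -y/ε` with `Δt = 1`. -/
noncomputable def FEJ (eps : ℝ) : Matrix (Fin 4) (Fin 4) ℝ :=
  !![1, -1, 1 / 2, -1 / 6;
     -1 / eps, -1, 0, 0;
     0, -1 / eps, -1, 0;
     0, 0, -1 / eps, -1]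

/-- Explicit inverse of `FEJ`. -/
noncomputable def Binv (e : ℝ) : Matrix (Fin 4) (Fin 4) ℝ :=
  !![6*e^3/(6*e^3+6*e^2+3*e+1), -(6*e^3+3*e^2+e)/(6*e^3+6*e^2+3*e+1),
       (3*e^3+e^2)/(6*e^3+6*e^2+3*e+1), -(e^3)/(6*e^3+6*e^2+3*e+1);
     -(6*e^2)/(6*e^3+6*e^2+3*e+1), -(6*e^3)/(6*e^3+6*e^2+3*e+1),
       -(3*e^2+e)/(6*e^3+6*e^2+3*e+1), e^2/(6*e^3+6*e^2+3*e+1);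
     6*e/(6*e^3+6*e^2+3*e+1), 6*e^2/(6*e^3+6*e^2+3*e+1),
       -(6*e^3+6*e^2)/(6*e^3+6*e^2+3*e+1), -e/(6*e^3+6*e^2+3*e+1);
     -6/(6*e^3+6*e^2+3*e+1), -(6*e)/(6*e^3+6*e^2+3*e+1),
       (6*e^2+6*e)/(6*e^3+6*e^2+3*e+1), -(6*e^3+6*e^2+3*e)/(6*e^3+6*e^2+3*e+1)]

lemma q_pos {e : ℝ} (he : 0 < e) : (0:ℝ) < 6*e^3+6*e^2+3*e+1 := by nlinarith

lemma FEJ_mul_Binv {e : ℝ} (he : 0 < e) : FEJ e * Binv e = 1 := by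
  have hq : (6*e^3+6*e^2+3*e+1) ≠ 0 := (q_pos he).ne'
  have he' : e ≠ 0 := he.ne'
  ext i j
  fin_cases i <;> fin_cases j <;>
    simp [FEJ, Binv, Matrix.mul_apply, Fin.sum_univ_four, Matrix.one_apply] <;>
    field_simp <;> ring

lemma colNorm_le {A : Matrix (Fin 4) (Fin 4) ℝ} {M : ℝ}
    (h : ∀ j, ∑ i, |A i j| ≤ M) : colNorm A ≤ M :=
  Finset.sup'_le _ _ fun j _ => h j

lemma colNorm_nonneg {A : Matrix (Fin 4) (Fin 4) ℝ} : 0 ≤ colNorm A :=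
  le_trans (Finset.sum_nonneg fun i _ => abs_nonneg _)
    (Finset.le_sup' (f := fun j => ∑ i, |A i j|) (Finset.mem_univ (0 : Fin 4)))

lemma hdiv {p q c : ℝ} (hq : 0 < q) (h1 : p ≤ c*q) (h2 : -(c*q) ≤ p) : |p/q| ≤ c := by
  rw [abs_div, abs_of_pos hq, div_le_iff₀ hq]
  exact abs_le.mpr ⟨by linarith, h1⟩

theorem stmt_15 :
    ∃ c eps₀ : ℝ, 0 < c ∧ 0 < eps₀ ∧
      ∀ eps : ℝ, 0 < eps → eps ≤ eps₀ → cond1 (FEJ eps) ≤ c / eps := by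
  refine ⟨128, 1, by norm_num, by norm_num, ?_⟩
  intro e he he1
  have hq : (0:ℝ) < 6*e^3+6*e^2+3*e+1 := q_pos he
  have hinv : (FEJ e)⁻¹ = Binv e := Matrix.inv_eq_right_inv (FEJ_mul_Binv he)
  have hinv1 : (1/e) * e = 1 := by field_simp
  have hepos : (0:ℝ) < 1/e := by positivity
  have hAe : ∀ i j : Fin 4, |FEJ e i j| ≤ 1/e := by
    intro i j
    fin_cases i <;> fin_cases j <;>
      simp [FEJ, abs_div, abs_of_pos he, Matrix.vecHead, Matrix.vecTail] <;>
      first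
      | nlinarith [mul_inv_cancel₀ (ne_of_gt he), inv_pos.mpr he]
      | (rw [abs_le]; constructor <;>
          nlinarith [mul_inv_cancel₀ (ne_of_gt he), inv_pos.mpr he])
  have hBe : ∀ i j : Fin 4, |Binv e i j| ≤ 8 := by
    intro i j
    fin_cases i <;> fin_cases j <;>
      · simp only [Binv, Matrix.cons_val', Matrix.cons_val_zero, Matrix.cons_val_one,
          Matrix.head_cons, Matrix.empty_val', Matrix.cons_val_fin_one,
          Matrix.cons_val_two, Matrix.cons_val_three, Matrix.tail_cons, Matrix.of_apply,
          Fin.isValue, Matrix.cons_val_succ]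
        apply hdiv hq <;> nlinarith
  have hA : colNorm (FEJ e) ≤ 4 * (1/e) := by
    apply colNorm_le
    intro j
    calc ∑ i, |FEJ e i j| ≤ ∑ _i : Fin 4, 1/e :=
          Finset.sum_le_sum fun i _ => hAe i j
      _ = 4 * (1/e) := by simp [Finset.sum_const]
  have hB : colNorm (Binv e) ≤ 32 := by
    apply colNorm_le
    intro j
    calc ∑ i, |Binv e i j| ≤ ∑ _i : Fin 4, (8:ℝ) :=
          Finset.sum_le_sum fun i _ => hBe i j
      _ = 32 := by norm_num
  have key : cond1 (FEJ e) ≤ (4 * (1/e)) * 32 := by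
    rw [cond1, hinv]
    exact mul_le_mul hA hB colNorm_nonneg (by positivity)
  calc cond1 (FEJ e) ≤ (4 * (1/e)) * 32 := key
    _ = 128 / e := by ring
end
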